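/- Suppose Q is in rational normal form with parameters z and k_1,…,k_d, and γ is generic. Define bilinear maps α_1, α_2 on g(γ,Q) by α_1(L_m,L_n)=δ_{m+n,0}·((m_γ)^3−m_γ)/12 if m∈R and α_1(L_m,L_n)=0 if m∉R, where m_γ=(γ|m)/(γ|k_1e_1); and α_2(L_r,L_s)=δ_{r+s,0}·σ(r,−r)·(γ|r)/(γ|k_1e_1) if r∈ℤ^d∖R and α_2(L_r,L_s)=0 if r∈R. Then α_1 and α_2 are 2-cocycles on g, and no nonzero ℂ-linear combination of α_1 and α_2 is a 2-coboundary. -/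
import Mathlib


open scoped BigOperators

namespace QTorus

/-- σ(m,n) = ∏_{i<j} q_{ji}^{m_j n_i}. -/
noncomputable def qsigma (d : ℕ) (Q : Matrix (Fin d) (Fin d) ℂ) (m n : Fin d → ℤ) : ℂ :=
  ∏ i : Fin d, ∏ j : Fin d, if i < j then Q j i ^ (m j * n i) else 1

/-- The radical subgroup R = {m | σ(m,n)=σ(n,m) for all n}. -/
def Rset (d : ℕ) (Q : Matrix (Fin d) (Fin d) ℂ) : Set (Fin d → ℤ) :=
  {m | ∀ n : Fin d → ℤ, qsigma d Q m n = qsigma d Q n m}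

/-- (γ|m) = ∑ γ_i m_i. -/
noncomputable def ip (d : ℕ) (γ : Fin d → ℂ) (m : Fin d → ℤ) : ℂ :=
  ∑ i : Fin d, γ i * (m i : ℂ)

/-- The underlying vector space of g(γ,Q): formal ℂ-linear combinations of basis
vectors indexed by ℤ^d. -/
abbrev g (d : ℕ) := (Fin d → ℤ) →₀ ℂ

/-- The basis vector L_m. -/
noncomputable def L (d : ℕ) (m : Fin d → ℤ) : g d := Finsupp.single m 1

/-- Hypotheses on the matrix Q: nonzero entries, q_{ii}=1, q_{ij}q_{ji}=1. -/
def QOk (d : ℕ) (Q : Matrix (Fin d) (Fin d) ℂ) : Prop :=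
  (∀ i, Q i i = 1) ∧ (∀ i j, Q i j * Q j i = 1) ∧ (∀ i j, Q i j ≠ 0)

/-- γ is generic: γ_1,…,γ_d are linearly independent over ℚ. -/
def Generic (d : ℕ) (γ : Fin d → ℂ) : Prop := LinearIndependent ℚ γ

open Classical in
/-- Structure constants of g(γ,Q): [L_m, L_n] = sc(m,n) • L_{m+n}. -/
noncomputable def sc (d : ℕ) (Q : Matrix (Fin d) (Fin d) ℂ) (γ : Fin d → ℂ)
    (m n : Fin d → ℤ) : ℂ :=
  if m ∈ Rset d Q then
    (if n ∈ Rset d Q then qsigma d Q m n * ip d γ (n - m)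
     else qsigma d Q m n * ip d γ n)
  else
    (if n ∈ Rset d Q then -(qsigma d Q n m * ip d γ m)
     else qsigma d Q m n - qsigma d Q n m)

/-- The bracket of g(γ,Q), as the bilinear extension of
[L_m, L_n] = sc(m,n) • L_{m+n}. -/
noncomputable def br (d : ℕ) (Q : Matrix (Fin d) (Fin d) ℂ) (γ : Fin d → ℂ)
    (x y : g d) : g d :=
  x.sum fun m a => y.sum fun n b => Finsupp.single (m + n) (a * b * sc d Q γ m n)

/-- A Lie algebra automorphism of g(γ,Q): a linear equivalence preserving the bracket. -/
def IsAut (d : ℕ) (Q : Matrix (Fin d) (Fin d) ℂ) (γ : Fin d → ℂ)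
    (θ : g d ≃ₗ[ℂ] g d) : Prop :=
  ∀ x y : g d, θ (br d Q γ x y) = br d Q γ (θ x) (θ y)

/-- A derivation of g(γ,Q). -/
def IsDer (d : ℕ) (Q : Matrix (Fin d) (Fin d) ℂ) (γ : Fin d → ℂ)
    (D : g d →ₗ[ℂ] g d) : Prop :=
  ∀ x y : g d, D (br d Q γ x y) = br d Q γ (D x) y + br d Q γ x (D y)

open Classical in
/-- δ(n,R) = 1 if n ∈ R, 0 otherwise. -/
noncomputable def deltaR (d : ℕ) (Q : Matrix (Fin d) (Fin d) ℂ) (n : Fin d → ℤ) : ℕ :=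
  if n ∈ Rset d Q then 1 else 0

/-- A 2-cocycle on g(γ,Q). -/
def IsCocycle (d : ℕ) (Q : Matrix (Fin d) (Fin d) ℂ) (γ : Fin d → ℂ)
    (α : g d →ₗ[ℂ] g d →ₗ[ℂ] ℂ) : Prop :=
  (∀ x y : g d, α x y = - α y x) ∧
  (∀ x y z : g d,
    α (br d Q γ x y) z + α (br d Q γ z x) y + α (br d Q γ y z) x = 0)

/-- i ↔ j is one of the exceptional index pairs (2l-1,2l) (1-based) of the rational
normal form. Here indices are 0-based. -/
def OffDiagPair (z : ℕ) (i j : ℕ) : Prop :=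
  ∃ l : ℕ, l < z ∧ ((i = 2 * l ∧ j = 2 * l + 1) ∨ (i = 2 * l + 1 ∧ j = 2 * l))

/-- Q is in rational normal form with parameters z and k_1,…,k_d (0-based indexing:
the paper's pair (2i-1,2i) is the Lean pair (2l, 2l+1) with l = i-1). -/
def IsRNF (d : ℕ) (Q : Matrix (Fin d) (Fin d) ℂ) (z : ℕ) (k : Fin d → ℕ) : Prop :=
  0 < z ∧ 2 * z ≤ d ∧
  (∀ i j : Fin d, ¬ OffDiagPair z i.val j.val → Q i j = 1) ∧
  (∀ (l : ℕ) (_ : l < z) (hi : 2 * l < d) (hj : 2 * l + 1 < d),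
      IsPrimitiveRoot (Q ⟨2 * l, hi⟩ ⟨2 * l + 1, hj⟩) (k ⟨2 * l, hi⟩) ∧
      Q ⟨2 * l + 1, hj⟩ ⟨2 * l, hi⟩ = (Q ⟨2 * l, hi⟩ ⟨2 * l + 1, hj⟩)⁻¹ ∧
      k ⟨2 * l + 1, hj⟩ = k ⟨2 * l, hi⟩ ∧
      1 < k ⟨2 * l, hi⟩) ∧
  (∀ (i : ℕ) (_ : i + 1 < 2 * z) (h1 : i < d) (h2 : i + 1 < d),
      k ⟨i + 1, h2⟩ ∣ k ⟨i, h1⟩) ∧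
  (∀ i : Fin d, 2 * z ≤ i.val → k i = 1)

/-- The vector k_1 e_1 ∈ ℤ^d. -/
noncomputable def k1e1 (d : ℕ) (k : Fin d → ℕ) (hd : 0 < d) : Fin d → ℤ :=
  Pi.single ⟨0, hd⟩ (k ⟨0, hd⟩ : ℤ)

/-- A 2-cocycle is normalized if α(L_{m-k₁e₁}, L_{k₁e₁})=0 for m ∈ R, m ≠ 2k₁e₁,
α(L_0, L_{2k₁e₁})=0, α(L_0, L_s)=0 for s ∉ R, and α(L_m,L_n)=0 whenever m+n ≠ 0. -/
def IsNormalized (d : ℕ) (Q : Matrix (Fin d) (Fin d) ℂ) (k : Fin d → ℕ) (hd : 0 < d)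
    (α : g d →ₗ[ℂ] g d →ₗ[ℂ] ℂ) : Prop :=
  (∀ m ∈ Rset d Q, m ≠ 2 • k1e1 d k hd →
      α (L d (m - k1e1 d k hd)) (L d (k1e1 d k hd)) = 0) ∧
  α (L d 0) (L d (2 • k1e1 d k hd)) = 0 ∧
  (∀ s, s ∉ Rset d Q → α (L d 0) (L d s) = 0) ∧
  (∀ m n : Fin d → ℤ, m + n ≠ 0 → α (L d m) (L d n) = 0)

/-- The degree derivation ∂_i, acting by ∂_i(L_m) = m_i L_m. -/
noncomputable def deg (d : ℕ) (i : Fin d) (y : g d) : g d :=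
  y.sum fun m a => Finsupp.single m ((m i : ℂ) * a)

open Classical in
/-- The 2-cocycle α₁: α₁(L_m,L_n) = δ_{m+n,0}((m_γ)³-m_γ)/12 for m ∈ R, 0 otherwise,
where m_γ = (γ|m)/(γ|k₁e₁). -/
noncomputable def alpha1 (d : ℕ) (Q : Matrix (Fin d) (Fin d) ℂ) (γ : Fin d → ℂ)
    (k : Fin d → ℕ) (hd : 0 < d) (x y : g d) : ℂ :=
  x.sum fun m a => y.sum fun n b => a * b *
    (if m ∈ Rset d Q ∧ m + n = 0 then
       ((ip d γ m / ip d γ (k1e1 d k hd)) ^ 3 - ip d γ m / ip d γ (k1e1 d k hd)) / 12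
     else 0)

open Classical in
/-- The 2-cocycle α₂: α₂(L_r,L_s) = δ_{r+s,0} σ(r,-r)(γ|r)/(γ|k₁e₁) for r ∉ R,
0 otherwise. -/
noncomputable def alpha2 (d : ℕ) (Q : Matrix (Fin d) (Fin d) ℂ) (γ : Fin d → ℂ)
    (k : Fin d → ℕ) (hd : 0 < d) (x y : g d) : ℂ :=
  x.sum fun m a => y.sum fun n b => a * b *
    (if m ∉ Rset d Q ∧ m + n = 0 then
       qsigma d Q m (-m) * (ip d γ m / ip d γ (k1e1 d k hd))
     else 0)


/-! ### Auxiliary lemmas -/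

section Aux

variable {d : ℕ} {Q : Matrix (Fin d) (Fin d) ℂ} {γ : Fin d → ℂ} {z : ℕ} {k : Fin d → ℕ}

lemma ip_add (m n : Fin d → ℤ) : ip d γ (m + n) = ip d γ m + ip d γ n := by
  simp [ip, mul_add, Finset.sum_add_distrib]

lemma ip_neg (m : Fin d → ℤ) : ip d γ (-m) = - ip d γ m := by
  simp [ip, Finset.sum_neg_distrib]

lemma ip_sub (m n : Fin d → ℤ) : ip d γ (m - n) = ip d γ m - ip d γ n := by
  rw [sub_eq_add_neg, ip_add, ip_neg]; ring

lemma ip_single (i0 : Fin d) (t : ℤ) : ip d γ (Pi.single i0 t) = γ i0 * t := by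
  rw [ip, Finset.sum_eq_single i0]
  · simp
  · intro j _ hj; simp [Pi.single_eq_of_ne hj]
  · simp

lemma qsigma_ne_zero (hQ : QOk d Q) (m n : Fin d → ℤ) : qsigma d Q m n ≠ 0 := by
  apply Finset.prod_ne_zero_iff.2
  intro i _
  apply Finset.prod_ne_zero_iff.2
  intro j _
  split_ifs
  · exact zpow_ne_zero _ (hQ.2.2 j i)
  · exact one_ne_zero

lemma qsigma_add_left (hQ : QOk d Q) (m m' n : Fin d → ℤ) :
    qsigma d Q (m + m') n = qsigma d Q m n * qsigma d Q m' n := by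
  rw [qsigma, qsigma, qsigma, ← Finset.prod_mul_distrib]
  refine Finset.prod_congr rfl fun i _ => ?_
  rw [← Finset.prod_mul_distrib]
  refine Finset.prod_congr rfl fun j _ => ?_
  split_ifs
  · rw [Pi.add_apply, add_mul, zpow_add₀ (hQ.2.2 j i)]
  · rw [one_mul]

lemma qsigma_add_right (hQ : QOk d Q) (m n n' : Fin d → ℤ) :
    qsigma d Q m (n + n') = qsigma d Q m n * qsigma d Q m n' := by
  rw [qsigma, qsigma, qsigma, ← Finset.prod_mul_distrib]
  refine Finset.prod_congr rfl fun i _ => ?_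
  rw [← Finset.prod_mul_distrib]
  refine Finset.prod_congr rfl fun j _ => ?_
  split_ifs
  · rw [Pi.add_apply, mul_add, zpow_add₀ (hQ.2.2 j i)]
  · rw [one_mul]

lemma qsigma_zero_left (n : Fin d → ℤ) : qsigma d Q 0 n = 1 := by
  simp [qsigma]

lemma qsigma_zero_right (m : Fin d → ℤ) : qsigma d Q m 0 = 1 := by
  simp [qsigma]

lemma qsigma_neg_left (hQ : QOk d Q) (m n : Fin d → ℤ) :
    qsigma d Q (-m) n = (qsigma d Q m n)⁻¹ := by
  symm
  rw [inv_eq_iff_eq_inv, eq_comm, inv_eq_of_mul_eq_one_left]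
  rw [← qsigma_add_left hQ, add_neg_cancel, qsigma_zero_left]

lemma qsigma_neg_right (hQ : QOk d Q) (m n : Fin d → ℤ) :
    qsigma d Q m (-n) = (qsigma d Q m n)⁻¹ := by
  symm
  rw [inv_eq_iff_eq_inv, eq_comm, inv_eq_of_mul_eq_one_left]
  rw [← qsigma_add_right hQ, add_neg_cancel, qsigma_zero_right]

lemma Rset_add (hQ : QOk d Q) {m n : Fin d → ℤ} (hm : m ∈ Rset d Q) (hn : n ∈ Rset d Q) :
    m + n ∈ Rset d Q := by
  intro x
  rw [qsigma_add_left hQ, qsigma_add_right hQ, hm x, hn x]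

lemma Rset_neg (hQ : QOk d Q) {m : Fin d → ℤ} (hm : m ∈ Rset d Q) : -m ∈ Rset d Q := by
  intro x
  rw [qsigma_neg_left hQ, qsigma_neg_right hQ, hm x]

lemma Rset_not_neg (hQ : QOk d Q) {m : Fin d → ℤ} (hm : m ∉ Rset d Q) : -m ∉ Rset d Q :=
  fun h => hm (by rw [← neg_neg m]; exact Rset_neg hQ h)

lemma Rset_not_add_left (hQ : QOk d Q) {m n : Fin d → ℤ} (hm : m ∈ Rset d Q)
    (hn : n ∉ Rset d Q) : m + n ∉ Rset d Q := fun h => hn (by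
  have := Rset_add hQ (Rset_neg hQ hm) h
  rwa [neg_add_cancel_left] at this)

lemma Rset_not_add_right (hQ : QOk d Q) {m n : Fin d → ℤ} (hm : m ∉ Rset d Q)
    (hn : n ∈ Rset d Q) : m + n ∉ Rset d Q := fun h => hm (by
  have := Rset_add hQ h (Rset_neg hQ hn)
  rwa [add_neg_cancel_right] at this)

lemma fin_val_mk {a : ℕ} (h : a < d) : ((⟨a, h⟩ : Fin d) : ℕ) = a := rfl

lemma qsigma_single_right (m : Fin d → ℤ) (i0 : Fin d) (t : ℤ) :
    qsigma d Q m (Pi.single i0 t) = ∏ j : Fin d, if i0 < j then Q j i0 ^ (m j * t) else 1 := by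
  rw [qsigma, Finset.prod_eq_single_of_mem i0 (Finset.mem_univ i0)]
  · refine Finset.prod_congr rfl fun j _ => ?_
    rw [Pi.single_eq_same]
  · intro i _ hi
    apply Finset.prod_eq_one; intro j _
    rw [Pi.single_eq_of_ne hi, mul_zero, zpow_zero, ite_self]

lemma qsigma_single_left (n : Fin d → ℤ) (j0 : Fin d) (t : ℤ) :
    qsigma d Q (Pi.single j0 t) n = ∏ i : Fin d, if i < j0 then Q j0 i ^ (t * n i) else 1 := by
  rw [qsigma]
  refine Finset.prod_congr rfl fun i _ => ?_
  rw [Finset.prod_eq_single_of_mem j0 (Finset.mem_univ j0)]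
  · rw [Pi.single_eq_same]
  · intro j _ hj
    rw [Pi.single_eq_of_ne hj, zero_mul, zpow_zero, ite_self]

lemma rnf_pow_one (hRNF : IsRNF d Q z k) {m : Fin d → ℤ}
    (hm : m ∈ Rset d Q) {l : ℕ} (hl : l < z) (hi : 2*l < d) (hj : 2*l+1 < d) :
    Q ⟨2*l+1, hj⟩ ⟨2*l, hi⟩ ^ (m ⟨2*l+1, hj⟩) = 1 ∧
    Q ⟨2*l+1, hj⟩ ⟨2*l, hi⟩ ^ (m ⟨2*l, hi⟩) = 1 := by
  have hlt : (⟨2*l, hi⟩ : Fin d) < ⟨2*l+1, hj⟩ := by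
    rw [Fin.mk_lt_mk]; omega
  constructor
  · have h := hm (Pi.single ⟨2*l, hi⟩ 1)
    rw [qsigma_single_right, qsigma_single_left] at h
    have hR : (∏ i : Fin d, if i < (⟨2*l, hi⟩ : Fin d) then Q ⟨2*l, hi⟩ i ^ ((1:ℤ) * m i) else 1) = 1 := by
      apply Finset.prod_eq_one; intro i _
      split_ifs with hii
      · rw [hRNF.2.2.1 ⟨2*l, hi⟩ i, one_zpow]
        rw [Fin.lt_def] at hii
        rintro ⟨l', hl', hc⟩
        simp only [fin_val_mk] at hc hii
        omega
      · rfl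
    have hL : (∏ j : Fin d, if (⟨2*l, hi⟩ : Fin d) < j then Q j ⟨2*l, hi⟩ ^ (m j * (1:ℤ)) else 1)
        = Q ⟨2*l+1, hj⟩ ⟨2*l, hi⟩ ^ (m ⟨2*l+1, hj⟩ * (1:ℤ)) := by
      rw [Finset.prod_eq_single_of_mem _ (Finset.mem_univ (⟨2*l+1, hj⟩ : Fin d))]
      · rw [if_pos hlt]
      · intro j _ hne
        split_ifs with hij
        · rw [hRNF.2.2.1 j ⟨2*l, hi⟩, one_zpow]
          rw [Fin.lt_def] at hij
          have hne' : (j : ℕ) ≠ 2*l+1 := fun hc => hne (Fin.ext hc)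
          rintro ⟨l', hl', hc⟩
          simp only [fin_val_mk] at hc hij
          omega
        · rfl
    rw [hL, hR, mul_one] at h
    exact h
  · have h := hm (Pi.single ⟨2*l+1, hj⟩ 1)
    rw [qsigma_single_right, qsigma_single_left] at h
    have hL : (∏ j : Fin d, if (⟨2*l+1, hj⟩ : Fin d) < j then Q j ⟨2*l+1, hj⟩ ^ (m j * (1:ℤ)) else 1) = 1 := by
      apply Finset.prod_eq_one; intro j _
      split_ifs with hjj
      · rw [hRNF.2.2.1 j ⟨2*l+1, hj⟩, one_zpow]
        rw [Fin.lt_def] at hjj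
        rintro ⟨l', hl', hc⟩
        simp only [fin_val_mk] at hc hjj
        omega
      · rfl
    have hR : (∏ i : Fin d, if i < (⟨2*l+1, hj⟩ : Fin d) then Q ⟨2*l+1, hj⟩ i ^ ((1:ℤ) * m i) else 1)
        = Q ⟨2*l+1, hj⟩ ⟨2*l, hi⟩ ^ ((1:ℤ) * m ⟨2*l, hi⟩) := by
      rw [Finset.prod_eq_single_of_mem _ (Finset.mem_univ (⟨2*l, hi⟩ : Fin d))]
      · rw [if_pos hlt]
      · intro i _ hne
        split_ifs with hii
        · rw [hRNF.2.2.1 ⟨2*l+1, hj⟩ i, one_zpow]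
          rw [Fin.lt_def] at hii
          have hne' : (i : ℕ) ≠ 2*l := fun hc => hne (Fin.ext hc)
          rintro ⟨l', hl', hc⟩
          simp only [fin_val_mk] at hc hii
          omega
        · rfl
    rw [hL, hR, one_mul] at h
    exact h.symm

lemma rnf_one (hRNF : IsRNF d Q z k) {m : Fin d → ℤ}
    (hm : m ∈ Rset d Q) (x : Fin d → ℤ) :
    qsigma d Q m x = 1 ∧ qsigma d Q x m = 1 := by
  constructor
  · apply Finset.prod_eq_one; intro i _
    apply Finset.prod_eq_one; intro j _
    split_ifs with hij
    · by_cases hodp : OffDiagPair z j.val i.val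
      · obtain ⟨l, hl, ⟨h1, h2⟩ | ⟨h1, h2⟩⟩ := hodp
        · rw [Fin.lt_def] at hij; omega
        · have hi' : 2*l < d := h2 ▸ i.isLt
          have hj' : 2*l+1 < d := h1 ▸ j.isLt
          obtain rfl : i = ⟨2*l, hi'⟩ := Fin.ext h2
          obtain rfl : j = ⟨2*l+1, hj'⟩ := Fin.ext h1
          rw [zpow_mul, (rnf_pow_one hRNF hm hl hi' hj').1, one_zpow]
      · rw [hRNF.2.2.1 j i hodp, one_zpow]
    · rfl
  · apply Finset.prod_eq_one; intro i _
    apply Finset.prod_eq_one; intro j _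
    split_ifs with hij
    · by_cases hodp : OffDiagPair z j.val i.val
      · obtain ⟨l, hl, ⟨h1, h2⟩ | ⟨h1, h2⟩⟩ := hodp
        · rw [Fin.lt_def] at hij; omega
        · have hi' : 2*l < d := h2 ▸ i.isLt
          have hj' : 2*l+1 < d := h1 ▸ j.isLt
          obtain rfl : i = ⟨2*l, hi'⟩ := Fin.ext h2
          obtain rfl : j = ⟨2*l+1, hj'⟩ := Fin.ext h1
          rw [mul_comm (x ⟨2*l+1, hj'⟩) (m ⟨2*l, hi'⟩), zpow_mul,
            (rnf_pow_one hRNF hm hl hi' hj').2, one_zpow]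
      · rw [hRNF.2.2.1 j i hodp, one_zpow]
    · rfl

lemma sigma_comm_of_mem_sum (hQ : QOk d Q) (hRNF : IsRNF d Q z k) {m n : Fin d → ℤ}
    (h : m + n ∈ Rset d Q) : qsigma d Q m n = qsigma d Q n m := by
  have h1 : qsigma d Q m m * qsigma d Q m n = 1 := by
    rw [← qsigma_add_right hQ]; exact (rnf_one hRNF h m).2
  have h2 : qsigma d Q m m * qsigma d Q n m = 1 := by
    rw [← qsigma_add_left hQ]; exact (rnf_one hRNF h m).1
  exact mul_left_cancel₀ (qsigma_ne_zero hQ m m) (h1.trans h2.symm)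

lemma sigma_diag_of_mem_sum (hQ : QOk d Q) (hRNF : IsRNF d Q z k) {m n : Fin d → ℤ}
    (h : m + n ∈ Rset d Q) : qsigma d Q m m = qsigma d Q n n := by
  have h1 : qsigma d Q m m * qsigma d Q m n = 1 := by
    rw [← qsigma_add_right hQ]; exact (rnf_one hRNF h m).2
  have h3 : qsigma d Q m n * qsigma d Q n n = 1 := by
    rw [← qsigma_add_left hQ]; exact (rnf_one hRNF h n).1
  rw [eq_inv_of_mul_eq_one_left h1, eq_inv_of_mul_eq_one_right h3]

/-! ### sc on basis elements -/

lemma sc_RR {m n : Fin d → ℤ} (hm : m ∈ Rset d Q) (hn : n ∈ Rset d Q) :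
    sc d Q γ m n = qsigma d Q m n * ip d γ (n - m) := by simp [sc, hm, hn]

lemma sc_RN {m n : Fin d → ℤ} (hm : m ∈ Rset d Q) (hn : n ∉ Rset d Q) :
    sc d Q γ m n = qsigma d Q m n * ip d γ n := by simp [sc, hm, hn]

lemma sc_NR {m n : Fin d → ℤ} (hm : m ∉ Rset d Q) (hn : n ∈ Rset d Q) :
    sc d Q γ m n = -(qsigma d Q n m * ip d γ m) := by simp [sc, hm, hn]

lemma sc_NN {m n : Fin d → ℤ} (hm : m ∉ Rset d Q) (hn : n ∉ Rset d Q) :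
    sc d Q γ m n = qsigma d Q m n - qsigma d Q n m := by simp [sc, hm, hn]

/-! ### The bilinear extension machinery -/

noncomputable def bil (d : ℕ) (B : (Fin d → ℤ) → (Fin d → ℤ) → ℂ) (x y : g d) : ℂ :=
  x.sum fun m a => y.sum fun n b => a * b * B m n

lemma bil_skew {B : (Fin d → ℤ) → (Fin d → ℤ) → ℂ}
    (hB : ∀ m n, B m n = - B n m) (x y : g d) :
    bil d B x y = - bil d B y x := by
  simp only [bil, Finsupp.sum]
  rw [Finset.sum_comm, ← Finset.sum_neg_distrib]
  refine Finset.sum_congr rfl fun n _ => ?_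
  rw [← Finset.sum_neg_distrib]
  refine Finset.sum_congr rfl fun m _ => ?_
  rw [hB m n]; ring

lemma bil_single (B : (Fin d → ℤ) → (Fin d → ℤ) → ℂ) (m n : Fin d → ℤ) :
    bil d B (L d m) (L d n) = B m n := by
  rw [bil, L, Finsupp.sum_single_index (by simp [Finsupp.sum])]
  rw [L, Finsupp.sum_single_index (by simp)]
  rw [one_mul, one_mul]

lemma br_single (m n : Fin d → ℤ) :
    br d Q γ (L d m) (L d n) = Finsupp.single (m + n) (sc d Q γ m n) := by
  rw [br, L, Finsupp.sum_single_index (by simp [Finsupp.sum])]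
  rw [L, Finsupp.sum_single_index (by simp)]
  rw [one_mul, one_mul]

lemma bil_br (B : (Fin d → ℤ) → (Fin d → ℤ) → ℂ) (x y w : g d) :
    bil d B (br d Q γ x y) w =
      ∑ m ∈ x.support, ∑ n ∈ y.support, ∑ p ∈ w.support,
        x m * y n * w p * (sc d Q γ m n * B (m + n) p) := by
  have h0 : ∀ m' : Fin d → ℤ,
      (w.sum fun p c => (0:ℂ) * c * B m' p) = 0 := fun m' => by
    simp [Finsupp.sum]
  have h1 : ∀ (m' : Fin d → ℤ) (b₁ b₂ : ℂ),
      (w.sum fun p c => (b₁ + b₂) * c * B m' p) =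
        (w.sum fun p c => b₁ * c * B m' p) + (w.sum fun p c => b₂ * c * B m' p) := by
    intro m' b₁ b₂
    rw [← Finsupp.sum_add]
    exact Finsupp.sum_congr fun p _ => by ring
  have hsingle : ∀ (u : Fin d → ℤ) (c0 : ℂ),
      (Finsupp.single u c0).sum (fun m' a' => w.sum fun p c => a' * c * B m' p) =
        w.sum fun p c => c0 * c * B u p := fun u c0 => Finsupp.sum_single_index (h0 u)
  rw [bil, br]
  simp only [Finsupp.sum_sum_index (h := fun m' a' => w.sum fun p c => a' * c * B m' p) h0 h1]
  simp only [hsingle]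
  simp only [Finsupp.sum]
  refine Finset.sum_congr rfl fun m _ => ?_
  refine Finset.sum_congr rfl fun n _ => ?_
  refine Finset.sum_congr rfl fun p _ => by ring

lemma sum3_rot {α : Type*} (s t u : Finset α) (F : α → α → α → ℂ) :
    ∑ p ∈ u, ∑ m ∈ s, ∑ n ∈ t, F m n p = ∑ m ∈ s, ∑ n ∈ t, ∑ p ∈ u, F m n p := by
  rw [Finset.sum_comm]
  exact Finset.sum_congr rfl fun m _ => Finset.sum_comm

lemma sum3_rot2 {α : Type*} (s t u : Finset α) (F : α → α → α → ℂ) :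
    ∑ n ∈ t, ∑ p ∈ u, ∑ m ∈ s, F m n p = ∑ m ∈ s, ∑ n ∈ t, ∑ p ∈ u, F m n p := by
  rw [show (∑ n ∈ t, ∑ p ∈ u, ∑ m ∈ s, F m n p)
      = ∑ n ∈ t, ∑ m ∈ s, ∑ p ∈ u, F m n p from
    Finset.sum_congr rfl fun n _ => Finset.sum_comm]
  exact Finset.sum_comm

lemma bil_cocycle {B : (Fin d → ℤ) → (Fin d → ℤ) → ℂ}
    (hcore : ∀ m n p : Fin d → ℤ,
      sc d Q γ m n * B (m + n) p + sc d Q γ p m * B (p + m) n +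
        sc d Q γ n p * B (n + p) m = 0)
    (x y w : g d) :
    bil d B (br d Q γ x y) w + bil d B (br d Q γ w x) y + bil d B (br d Q γ y w) x = 0 := by
  rw [bil_br B x y w, bil_br B w x y, bil_br B y w x]
  rw [sum3_rot x.support y.support w.support
    (fun m n p => w p * x m * y n * (sc d Q γ p m * B (p + m) n))]
  rw [sum3_rot2 x.support y.support w.support
    (fun m n p => y n * w p * x m * (sc d Q γ n p * B (n + p) m))]
  rw [← Finset.sum_add_distrib, ← Finset.sum_add_distrib]
  apply Finset.sum_eq_zero; intro m _
  rw [← Finset.sum_add_distrib, ← Finset.sum_add_distrib]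
  apply Finset.sum_eq_zero; intro n _
  rw [← Finset.sum_add_distrib, ← Finset.sum_add_distrib]
  apply Finset.sum_eq_zero; intro p _
  have h := hcore m n p
  linear_combination (x m * y n * w p) * h

/-! ### The scalar versions of α₁, α₂ and their properties -/

open Classical in
noncomputable def Am1 (d : ℕ) (Q : Matrix (Fin d) (Fin d) ℂ) (γ : Fin d → ℂ)
    (k : Fin d → ℕ) (hd : 0 < d) (m n : Fin d → ℤ) : ℂ :=
  if m ∈ Rset d Q ∧ m + n = 0 then
    ((ip d γ m / ip d γ (k1e1 d k hd)) ^ 3 - ip d γ m / ip d γ (k1e1 d k hd)) / 12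
  else 0

open Classical in
noncomputable def Am2 (d : ℕ) (Q : Matrix (Fin d) (Fin d) ℂ) (γ : Fin d → ℂ)
    (k : Fin d → ℕ) (hd : 0 < d) (m n : Fin d → ℤ) : ℂ :=
  if m ∉ Rset d Q ∧ m + n = 0 then
    qsigma d Q m (-m) * (ip d γ m / ip d γ (k1e1 d k hd))
  else 0

lemma alpha1_eq_bil (hd : 0 < d) (x y : g d) :
    alpha1 d Q γ k hd x y = bil d (Am1 d Q γ k hd) x y := rfl

lemma alpha2_eq_bil (hd : 0 < d) (x y : g d) :
    alpha2 d Q γ k hd x y = bil d (Am2 d Q γ k hd) x y := rfl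

lemma Am1_skew (hQ : QOk d Q) (hd : 0 < d) (m n : Fin d → ℤ) :
    Am1 d Q γ k hd m n = - Am1 d Q γ k hd n m := by
  classical
  by_cases h : m + n = 0
  · have hnm : n + m = 0 := by rw [add_comm]; exact h
    obtain rfl : n = -m := eq_neg_of_add_eq_zero_right h
    by_cases hm : m ∈ Rset d Q
    · rw [Am1, Am1, if_pos ⟨hm, h⟩, if_pos ⟨Rset_neg hQ hm, hnm⟩, ip_neg]
      ring
    · rw [Am1, Am1, if_neg (fun hc => hm hc.1),
        if_neg (fun hc => hm (by rw [← neg_neg m]; exact Rset_neg hQ hc.1))]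
      ring
  · have hnm : ¬(n + m = 0) := fun hc => h (by rw [add_comm]; exact hc)
    rw [Am1, Am1, if_neg (fun hc => h hc.2), if_neg (fun hc => hnm hc.2)]
    ring

lemma Am2_skew (hQ : QOk d Q) (hd : 0 < d) (m n : Fin d → ℤ) :
    Am2 d Q γ k hd m n = - Am2 d Q γ k hd n m := by
  classical
  by_cases h : m + n = 0
  · have hnm : n + m = 0 := by rw [add_comm]; exact h
    obtain rfl : n = -m := eq_neg_of_add_eq_zero_right h
    by_cases hm : m ∈ Rset d Q
    · rw [Am2, Am2, if_neg (fun hc => hc.1 hm),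
        if_neg (fun hc => hc.1 (Rset_neg hQ hm))]
      ring
    · rw [Am2, Am2, if_pos ⟨hm, h⟩, if_pos ⟨Rset_not_neg hQ hm, hnm⟩,
        neg_neg, ip_neg, qsigma_neg_left hQ, qsigma_neg_right hQ]
      ring
  · have hnm : ¬(n + m = 0) := fun hc => h (by rw [add_comm]; exact hc)
    rw [Am2, Am2, if_neg (fun hc => h hc.2), if_neg (fun hc => hnm hc.2)]
    ring

lemma core1 (hQ : QOk d Q) (hRNF : IsRNF d Q z k) (hd : 0 < d)
    (hc : ip d γ (k1e1 d k hd) ≠ 0) (m n p : Fin d → ℤ) :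
    sc d Q γ m n * Am1 d Q γ k hd (m + n) p + sc d Q γ p m * Am1 d Q γ k hd (p + m) n +
      sc d Q γ n p * Am1 d Q γ k hd (n + p) m = 0 := by
  classical
  by_cases h0 : m + n + p = 0
  · obtain rfl : p = -(m + n) := eq_neg_of_add_eq_zero_right h0
    rw [show -(m + n) + m = -n from by abel, show n + -(m + n) = -m from by abel]
    simp only [Am1, add_neg_cancel, neg_add_cancel, and_true]
    by_cases hm : m ∈ Rset d Q <;> by_cases hn : n ∈ Rset d Q
    · -- both in R : Virasoro identity
      have hmn : m + n ∈ Rset d Q := Rset_add hQ hm hn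
      have hp : -(m + n) ∈ Rset d Q := Rset_neg hQ hmn
      rw [if_pos hmn, if_pos (Rset_neg hQ hn), if_pos (Rset_neg hQ hm)]
      rw [sc_RR hm hn, sc_RR hp hm, sc_RR hn hp]
      rw [(rnf_one hRNF hm n).1, (rnf_one hRNF hp m).1, (rnf_one hRNF hp n).2]
      simp only [ip_sub, ip_add, ip_neg]
      field_simp
      ring
    · -- m ∈ R, n ∉ R
      have hmn : m + n ∉ Rset d Q := Rset_not_add_left hQ hm hn
      have hp : -(m + n) ∉ Rset d Q := Rset_not_neg hQ hmn
      rw [if_neg hmn, if_neg (Rset_not_neg hQ hn), if_pos (Rset_neg hQ hm)]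
      rw [sc_NN hn hp]
      have : qsigma d Q n (-(m + n)) = qsigma d Q (-(m + n)) n :=
        sigma_comm_of_mem_sum hQ hRNF
          (by rw [show n + -(m + n) = -m from by abel]; exact Rset_neg hQ hm)
      rw [this, sub_self]
      ring
    · -- m ∉ R, n ∈ R
      have hmn : m + n ∉ Rset d Q := Rset_not_add_right hQ hm hn
      have hp : -(m + n) ∉ Rset d Q := Rset_not_neg hQ hmn
      rw [if_neg hmn, if_pos (Rset_neg hQ hn), if_neg (Rset_not_neg hQ hm)]
      rw [sc_NN hp hm]
      have : qsigma d Q (-(m + n)) m = qsigma d Q m (-(m + n)) :=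
        sigma_comm_of_mem_sum hQ hRNF
          (by rw [show -(m + n) + m = -n from by abel]; exact Rset_neg hQ hn)
      rw [this, sub_self]
      ring
    · -- neither in R
      by_cases hmn : m + n ∈ Rset d Q
      · rw [if_pos hmn, if_neg (Rset_not_neg hQ hn), if_neg (Rset_not_neg hQ hm)]
        rw [sc_NN hm hn, sigma_comm_of_mem_sum hQ hRNF hmn, sub_self]
        ring
      · rw [if_neg hmn, if_neg (Rset_not_neg hQ hn), if_neg (Rset_not_neg hQ hm)]
        ring
  · have e1 : ¬(m + n ∈ Rset d Q ∧ (m + n) + p = 0) := fun hc => h0 hc.2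
    have e2 : ¬(p + m ∈ Rset d Q ∧ (p + m) + n = 0) :=
      fun hc => h0 (by rw [← hc.2]; abel)
    have e3 : ¬(n + p ∈ Rset d Q ∧ (n + p) + m = 0) :=
      fun hc => h0 (by rw [← hc.2]; abel)
    rw [Am1, Am1, Am1, if_neg e1, if_neg e2, if_neg e3]
    ring

lemma core2 (hQ : QOk d Q) (hRNF : IsRNF d Q z k) (hd : 0 < d)
    (hc : ip d γ (k1e1 d k hd) ≠ 0) (m n p : Fin d → ℤ) :
    sc d Q γ m n * Am2 d Q γ k hd (m + n) p + sc d Q γ p m * Am2 d Q γ k hd (p + m) n +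
      sc d Q γ n p * Am2 d Q γ k hd (n + p) m = 0 := by
  classical
  by_cases h0 : m + n + p = 0
  · obtain rfl : p = -(m + n) := eq_neg_of_add_eq_zero_right h0
    rw [show -(m + n) + m = -n from by abel, show n + -(m + n) = -m from by abel]
    simp only [Am2, add_neg_cancel, neg_add_cancel, and_true, neg_neg]
    by_cases hm : m ∈ Rset d Q <;> by_cases hn : n ∈ Rset d Q
    · -- both in R : all terms vanish
      have hmn : m + n ∈ Rset d Q := Rset_add hQ hm hn
      rw [if_neg (not_not_intro hmn), if_neg (not_not_intro (Rset_neg hQ hn)),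
        if_neg (not_not_intro (Rset_neg hQ hm))]
      ring
    · -- m ∈ R, n ∉ R
      have hmn : m + n ∉ Rset d Q := Rset_not_add_left hQ hm hn
      have hp : -(m + n) ∉ Rset d Q := Rset_not_neg hQ hmn
      rw [if_pos hmn, if_pos (Rset_not_neg hQ hn), if_neg (not_not_intro (Rset_neg hQ hm))]
      rw [sc_RN hm hn, sc_NR hp hm]
      rw [(rnf_one hRNF hm n).1, (rnf_one hRNF hm (-(m+n))).1]
      rw [qsigma_neg_right hQ (m+n) (m+n), qsigma_neg_left hQ n n]
      rw [qsigma_add_left hQ, qsigma_add_right hQ, qsigma_add_right hQ]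
      rw [(rnf_one hRNF hm m).1, (rnf_one hRNF hm n).1, (rnf_one hRNF hm n).2]
      simp only [ip_add, ip_neg]
      ring
    · -- m ∉ R, n ∈ R
      have hmn : m + n ∉ Rset d Q := Rset_not_add_right hQ hm hn
      have hp : -(m + n) ∉ Rset d Q := Rset_not_neg hQ hmn
      rw [if_pos hmn, if_neg (not_not_intro (Rset_neg hQ hn)), if_pos (Rset_not_neg hQ hm)]
      rw [sc_NR hm hn, sc_RN hn hp]
      rw [(rnf_one hRNF hn m).1, (rnf_one hRNF hn (-(m+n))).1]
      rw [qsigma_neg_right hQ (m+n) (m+n), qsigma_neg_left hQ m m]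
      rw [qsigma_add_left hQ m n (m+n), qsigma_add_right hQ m m n]
      rw [(rnf_one hRNF hn (m+n)).1, (rnf_one hRNF hn m).2]
      simp only [ip_add, ip_neg]
      ring
    · by_cases hmn : m + n ∈ Rset d Q
      · -- m+n ∈ R
        have hp : -(m + n) ∈ Rset d Q := Rset_neg hQ hmn
        rw [if_neg (not_not_intro hmn), if_pos (Rset_not_neg hQ hn),
          if_pos (Rset_not_neg hQ hm)]
        rw [sc_RN hp hm, sc_NR hn hp]
        rw [(rnf_one hRNF hp m).1, (rnf_one hRNF hp n).1]
        rw [qsigma_neg_left hQ n n, qsigma_neg_left hQ m m,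
          sigma_diag_of_mem_sum hQ hRNF hmn]
        simp only [ip_add, ip_neg]
        ring
      · -- nothing in R
        have hp : -(m + n) ∉ Rset d Q := Rset_not_neg hQ hmn
        rw [if_pos hmn, if_pos (Rset_not_neg hQ hn), if_pos (Rset_not_neg hQ hm)]
        rw [sc_NN hm hn, sc_NN hp hm, sc_NN hn hp]
        simp only [qsigma_neg_left hQ, qsigma_neg_right hQ]
        rw [qsigma_add_left hQ m n (m+n), qsigma_add_right hQ m m n,
          qsigma_add_right hQ n m n, qsigma_add_left hQ m n m, qsigma_add_left hQ m n n]
        have hC := qsigma_ne_zero hQ m n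
        have hD := qsigma_ne_zero hQ n m
        simp only [ip_add, ip_neg, mul_inv]
        linear_combination
          ((ip d γ (k1e1 d k hd))⁻¹ * (qsigma d Q m m)⁻¹ * (qsigma d Q n n)⁻¹ *
            (ip d γ m + ip d γ n) * (qsigma d Q n m)⁻¹) * mul_inv_cancel₀ hC -
          ((ip d γ (k1e1 d k hd))⁻¹ * (qsigma d Q m m)⁻¹ * (qsigma d Q n n)⁻¹ *
            (ip d γ m + ip d γ n) * (qsigma d Q m n)⁻¹) * mul_inv_cancel₀ hD
  · have e1 : ¬(m + n ∉ Rset d Q ∧ (m + n) + p = 0) := fun hc => h0 hc.2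
    have e2 : ¬(p + m ∉ Rset d Q ∧ (p + m) + n = 0) :=
      fun hc => h0 (by rw [← hc.2]; abel)
    have e3 : ¬(n + p ∉ Rset d Q ∧ (n + p) + m = 0) :=
      fun hc => h0 (by rw [← hc.2]; abel)
    rw [Am2, Am2, Am2, if_neg e1, if_neg e2, if_neg e3]
    ring

/-! ### Specific membership facts needed for non-triviality -/

lemma k1e1_pow (hd : 0 < d) (hd1 : 1 < d) (hRNF : IsRNF d Q z k) :
    Q ⟨1, hd1⟩ ⟨0, hd⟩ ^ ((k ⟨0, hd⟩ : ℤ)) = 1 := by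
  have h := hRNF.2.2.2.1 0 hRNF.1 (by omega) (by omega)
  have hprim : IsPrimitiveRoot (Q ⟨0, hd⟩ ⟨1, hd1⟩) (k ⟨0, hd⟩) := h.1
  have hinv : Q ⟨1, hd1⟩ ⟨0, hd⟩ = (Q ⟨0, hd⟩ ⟨1, hd1⟩)⁻¹ := h.2.1
  rw [hinv, zpow_natCast, inv_pow, hprim.pow_eq_one, inv_one]

lemma k1e1_mem (hd : 0 < d) (hd1 : 1 < d) (hQ : QOk d Q) (hRNF : IsRNF d Q z k) :
    k1e1 d k hd ∈ Rset d Q := by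
  intro x
  rw [k1e1, qsigma_single_left, qsigma_single_right]
  have hL : (∏ i : Fin d, if i < (⟨0, hd⟩ : Fin d)
      then Q ⟨0, hd⟩ i ^ ((k ⟨0, hd⟩ : ℤ) * x i) else 1) = 1 := by
    apply Finset.prod_eq_one; intro i _
    rw [if_neg]
    intro hlt
    rw [Fin.lt_def] at hlt
    simp only [fin_val_mk] at hlt
    omega
  have hR : (∏ j : Fin d, if (⟨0, hd⟩ : Fin d) < j
      then Q j ⟨0, hd⟩ ^ (x j * (k ⟨0, hd⟩ : ℤ)) else 1) = 1 := by
    apply Finset.prod_eq_one; intro j _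
    split_ifs with hj
    · by_cases hj1 : j = ⟨1, hd1⟩
      · subst hj1
        rw [mul_comm, zpow_mul, k1e1_pow hd hd1 hRNF, one_zpow]
      · rw [hRNF.2.2.1 j ⟨0, hd⟩, one_zpow]
        rw [Fin.lt_def] at hj
        have hne : (j : ℕ) ≠ 1 := fun hcon => hj1 (Fin.ext hcon)
        rintro ⟨l', hl', hcase⟩
        simp only [fin_val_mk] at hcase hj
        omega
    · rfl
  rw [hL, hR]

lemma e0_not_mem (hd : 0 < d) (hd1 : 1 < d) (hQ : QOk d Q) (hRNF : IsRNF d Q z k) :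
    (Pi.single (⟨0, hd⟩ : Fin d) (1 : ℤ)) ∉ Rset d Q := by
  intro hmem
  have h := hmem (Pi.single ⟨1, hd1⟩ 1)
  rw [qsigma_single_right, qsigma_single_left] at h
  have hL : (∏ j : Fin d, if (⟨1, hd1⟩ : Fin d) < j
      then Q j ⟨1, hd1⟩ ^ ((Pi.single ⟨0, hd⟩ 1 : Fin d → ℤ) j * (1:ℤ)) else 1) = 1 := by
    apply Finset.prod_eq_one; intro j _
    split_ifs with hj
    · have hne : j ≠ ⟨0, hd⟩ := by
        intro hcon
        rw [Fin.lt_def, hcon] at hj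
        simp only [fin_val_mk] at hj
        omega
      rw [Pi.single_eq_of_ne hne, zero_mul, zpow_zero]
    · rfl
  have hR : (∏ i : Fin d, if i < (⟨1, hd1⟩ : Fin d)
      then Q ⟨1, hd1⟩ i ^ ((1:ℤ) * (Pi.single ⟨0, hd⟩ 1 : Fin d → ℤ) i) else 1)
      = Q ⟨1, hd1⟩ ⟨0, hd⟩ := by
    rw [Finset.prod_eq_single_of_mem _ (Finset.mem_univ (⟨0, hd⟩ : Fin d))]
    · rw [if_pos (by rw [Fin.lt_def]; simp only [fin_val_mk]; omega), Pi.single_eq_same]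
      norm_num
    · intro i _ hne
      split_ifs with hi
      · rw [Pi.single_eq_of_ne hne, mul_zero, zpow_zero]
      · rfl
  rw [hL, hR] at h
  have h2 := hRNF.2.2.2.1 0 hRNF.1 (by omega) (by omega)
  have hprim : IsPrimitiveRoot (Q ⟨0, hd⟩ ⟨1, hd1⟩) (k ⟨0, hd⟩) := h2.1
  have hinv : Q ⟨1, hd1⟩ ⟨0, hd⟩ = (Q ⟨0, hd⟩ ⟨1, hd1⟩)⁻¹ := h2.2.1
  have hk : 1 < k ⟨0, hd⟩ := h2.2.2.2
  have hone : Q ⟨0, hd⟩ ⟨1, hd1⟩ = 1 := by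
    rw [hinv] at h
    rw [← inv_inv (Q ⟨0, hd⟩ ⟨1, hd1⟩), ← h, inv_one]
  have hdvd : k ⟨0, hd⟩ ∣ 1 := hprim.dvd_of_pow_eq_one 1 (by rw [pow_one, hone])
  rw [Nat.dvd_one] at hdvd
  omega

end Aux
end QTorus

open QTorus

/-- for Q in rational normal form and γ generic, the bilinear maps α₁
and α₂ are 2-cocycles on g(γ,Q), and no nonzero linear combination of α₁ and α₂ is
a 2-coboundary. -/

theorem stmt18 (d : ℕ) (hd1 : 1 < d) (hd : 0 < d)
    (Q : Matrix (Fin d) (Fin d) ℂ) (hQ : QOk d Q)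
    (z : ℕ) (k : Fin d → ℕ) (hRNF : IsRNF d Q z k)
    (γ : Fin d → ℂ) (hγ : Generic d γ) :
    (∀ x y : g d, alpha1 d Q γ k hd x y = - alpha1 d Q γ k hd y x) ∧
    (∀ x y z' : g d,
      alpha1 d Q γ k hd (br d Q γ x y) z' + alpha1 d Q γ k hd (br d Q γ z' x) y +
        alpha1 d Q γ k hd (br d Q γ y z') x = 0) ∧
    (∀ x y : g d, alpha2 d Q γ k hd x y = - alpha2 d Q γ k hd y x) ∧
    (∀ x y z' : g d,
      alpha2 d Q γ k hd (br d Q γ x y) z' + alpha2 d Q γ k hd (br d Q γ z' x) y +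
        alpha2 d Q γ k hd (br d Q γ y z') x = 0) ∧
    (∀ c₁ c₂ : ℂ,
      (∃ f : g d →ₗ[ℂ] ℂ, ∀ x y : g d,
        c₁ * alpha1 d Q γ k hd x y + c₂ * alpha2 d Q γ k hd x y =
          f (br d Q γ x y)) →
      c₁ = 0 ∧ c₂ = 0) := by
  classical
  have hk0 : 1 < k ⟨0, hd⟩ := (hRNF.2.2.2.1 0 hRNF.1 (by omega) (by omega)).2.2.2
  have hγ0 : γ ⟨0, hd⟩ ≠ 0 := hγ.ne_zero ⟨0, hd⟩
  have hc : ip d γ (k1e1 d k hd) ≠ 0 := by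
    rw [k1e1, ip_single]
    apply mul_ne_zero hγ0
    have : ((k ⟨0, hd⟩ : ℤ) : ℂ) ≠ 0 := by
      exact_mod_cast (show (k ⟨0, hd⟩ : ℤ) ≠ 0 by omega)
    exact this
  refine ⟨?_, ?_, ?_, ?_, ?_⟩
  · intro x y
    rw [alpha1_eq_bil, alpha1_eq_bil]
    exact bil_skew (Am1_skew hQ hd) x y
  · intro x y w
    simp only [alpha1_eq_bil]
    exact bil_cocycle (core1 hQ hRNF hd hc) x y w
  · intro x y
    rw [alpha2_eq_bil, alpha2_eq_bil]
    exact bil_skew (Am2_skew hQ hd) x y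
  · intro x y w
    simp only [alpha2_eq_bil]
    exact bil_cocycle (core2 hQ hRNF hd hc) x y w
  · rintro c₁ c₂ ⟨f, hf⟩
    have key : ∀ m n : Fin d → ℤ,
        c₁ * Am1 d Q γ k hd m n + c₂ * Am2 d Q γ k hd m n =
          sc d Q γ m n * f (Finsupp.single (m + n) (1 : ℂ)) := by
      intro m n
      have h := hf (L d m) (L d n)
      rw [alpha1_eq_bil, alpha2_eq_bil, bil_single, bil_single, br_single] at h
      rw [h, show Finsupp.single (m + n) (sc d Q γ m n)
          = sc d Q γ m n • Finsupp.single (m + n) (1 : ℂ) from by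
        rw [Finsupp.smul_single', mul_one], map_smul, smul_eq_mul]
    set m1 := k1e1 d k hd with hm1def
    have hm1 : m1 ∈ Rset d Q := k1e1_mem hd hd1 hQ hRNF
    -- Step 1: f (L 0) = 0
    have h1 := key m1 (-m1)
    rw [add_neg_cancel] at h1
    have e1 : Am1 d Q γ k hd m1 (-m1) = 0 := by
      rw [Am1, if_pos ⟨hm1, add_neg_cancel m1⟩, div_self hc]
      norm_num
    have e2 : Am2 d Q γ k hd m1 (-m1) = 0 := by
      rw [Am2, if_neg (fun hcon => hcon.1 hm1)]
    rw [e1, e2, mul_zero, mul_zero, add_zero] at h1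
    have hsc1 : sc d Q γ m1 (-m1) = - ip d γ m1 - ip d γ m1 := by
      rw [sc_RR hm1 (Rset_neg hQ hm1), (rnf_one hRNF hm1 (-m1)).1, one_mul,
        ip_sub, ip_neg]
    have hscne : sc d Q γ m1 (-m1) ≠ 0 := by
      rw [hsc1]
      intro hcon
      exact hc (by linear_combination (-1/2 : ℂ) * hcon)
    have hF : f (Finsupp.single (0 : Fin d → ℤ) (1 : ℂ)) = 0 :=
      (mul_eq_zero.mp h1.symm).resolve_left hscne
    -- Step 2: c₁ = 0
    have h2 := key (m1 + m1) (-(m1 + m1))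
    rw [add_neg_cancel, hF, mul_zero] at h2
    have hm2 : m1 + m1 ∈ Rset d Q := Rset_add hQ hm1 hm1
    have e3 : Am2 d Q γ k hd (m1 + m1) (-(m1 + m1)) = 0 := by
      rw [Am2, if_neg (fun hcon => hcon.1 hm2)]
    have e4 : Am1 d Q γ k hd (m1 + m1) (-(m1 + m1)) = ((2:ℂ) ^ 3 - 2) / 12 := by
      rw [Am1, if_pos ⟨hm2, add_neg_cancel _⟩, ip_add]
      rw [show (ip d γ m1 + ip d γ m1) / ip d γ m1 = 2 from by
        rw [div_eq_iff hc]; ring]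
    rw [e3, e4, mul_zero, add_zero] at h2
    have hc1 : c₁ = 0 := by
      have hne : ((2:ℂ) ^ 3 - 2) / 12 ≠ 0 := by norm_num
      exact (mul_eq_zero.mp h2).resolve_right hne
    -- Step 3: c₂ = 0
    have he0 : (Pi.single (⟨0, hd⟩ : Fin d) (1 : ℤ)) ∉ Rset d Q :=
      e0_not_mem hd hd1 hQ hRNF
    have h3 := key (Pi.single ⟨0, hd⟩ 1) (-(Pi.single ⟨0, hd⟩ 1))
    rw [add_neg_cancel, hF, mul_zero] at h3
    have e5 : Am1 d Q γ k hd (Pi.single ⟨0, hd⟩ 1) (-(Pi.single ⟨0, hd⟩ 1)) = 0 := by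
      rw [Am1, if_neg (fun hcon => he0 hcon.1)]
    have e6 : Am2 d Q γ k hd (Pi.single ⟨0, hd⟩ 1) (-(Pi.single ⟨0, hd⟩ 1)) =
        qsigma d Q (Pi.single ⟨0, hd⟩ 1) (-(Pi.single ⟨0, hd⟩ 1)) *
          (ip d γ (Pi.single ⟨0, hd⟩ 1) / ip d γ m1) := by
      rw [Am2, if_pos ⟨he0, add_neg_cancel _⟩]
    rw [e5, mul_zero, zero_add, e6] at h3
    have hz : qsigma d Q (Pi.single ⟨0, hd⟩ 1) (-(Pi.single ⟨0, hd⟩ 1)) *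
        (ip d γ (Pi.single ⟨0, hd⟩ 1) / ip d γ m1) ≠ 0 := by
      apply mul_ne_zero
      · rw [qsigma_neg_right hQ]
        exact inv_ne_zero (qsigma_ne_zero hQ _ _)
      · apply div_ne_zero _ hc
        rw [ip_single]
        simpa using hγ0
    exact ⟨hc1, (mul_eq_zero.mp h3).resolve_right hz⟩
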